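/- For every bounded function φ : ℤ → ℝ, every i ∈ ℤ and every t > 0, the function t ↦ e^{tA}[φ](i) = Σ_{j ∈ ℤ} (e^{tA})_{ij} φ(j) is differentiable and its derivative equals A applied to e^{tA}[φ], i.e. d/dt ( e^{tA}[φ](i) ) = Σ_{j ∈ ℤ} a_{ij} · e^{tA}[φ](j). Thus e^{tA} is the fundamental solution of the linear system U' = AU. -/

import Mathlib

/-- The dispersal matrix `A = (a_{ij})_{i,j ∈ ℤ}`: `a_{ij} = β` if `j = i ± 1` and `i` even,
`a_{ij} = α` if `j = i ± 1` and `i` odd, and `a_{ij} = 0` otherwise. -/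
noncomputable def matA (α β : ℝ) (i j : ℤ) : ℝ :=
  if j = i + 1 ∨ j = i - 1 then (if Even i then β else α) else 0

/-- Entrywise matrix powers: `(A⁰)_{ij} = δ_{ij}` and `(A^{n+1})_{ij} = Σ_{k ∈ ℤ} (Aⁿ)_{ik} a_{kj}`. -/
noncomputable def matApow (α β : ℝ) : ℕ → ℤ → ℤ → ℝ
  | 0 => fun i j => if i = j then 1 else 0
  | n + 1 => fun i j => ∑' k : ℤ, matApow α β n i k * matA α β k j

/-- The matrix exponential, entrywise: . -/
noncomputable def matExp (α β t : ℝ) (i j : ℤ) : ℝ :=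
  ∑' n : ℕ, t ^ n * matApow α β n i j / (n.factorial : ℝ)

lemma tsum_pair {f : ℤ → ℝ} {a b : ℤ} (hab : a ≠ b) (h : ∀ k, k ≠ a → k ≠ b → f k = 0) :
    ∑' k, f k = f a + f b := by
  rw [tsum_eq_sum (s := ({a, b} : Finset ℤ)) ?_]
  · exact Finset.sum_pair hab
  · intro k hk
    simp only [Finset.mem_insert, Finset.mem_singleton] at hk
    push_neg at hk; exact h k hk.1 hk.2

lemma matA_eq_zero {α β : ℝ} {k j : ℤ} (h1 : k ≠ j - 1) (h2 : k ≠ j + 1) :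
    matA α β k j = 0 := by
  rw [matA, if_neg]; omega

lemma matApow_succ (α β : ℝ) (n : ℕ) (i j : ℤ) :
    matApow α β (n + 1) i j =
      matApow α β n i (j - 1) * matA α β (j - 1) j
        + matApow α β n i (j + 1) * matA α β (j + 1) j := by
  show (∑' k : ℤ, matApow α β n i k * matA α β k j) = _
  rw [tsum_pair (a := j - 1) (b := j + 1) (by omega)]
  intro k hk1 hk2
  rw [matA_eq_zero hk1 hk2, mul_zero]

lemma abs_matA_le {α β : ℝ} (hα : 0 < α) (hβ : 0 < β) (k j : ℤ) :
    |matA α β k j| ≤ max α β := by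
  rw [matA]
  split_ifs with h1 h2
  · rw [abs_of_pos hβ]; exact le_max_right _ _
  · rw [abs_of_pos hα]; exact le_max_left _ _
  all_goals simp only [abs_zero]; positivity

lemma abs_matApow_le {α β : ℝ} (hα : 0 < α) (hβ : 0 < β) (n : ℕ) (i j : ℤ) :
    |matApow α β n i j| ≤ (2 * max α β) ^ n := by
  induction n generalizing j with
  | zero => simp [matApow]; split_ifs <;> simp
  | succ n ih =>
    rw [matApow_succ]
    have hγ : (0:ℝ) < max α β := lt_max_of_lt_left hα
    calc |matApow α β n i (j - 1) * matA α β (j - 1) j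
        + matApow α β n i (j + 1) * matA α β (j + 1) j|
        ≤ |matApow α β n i (j - 1)| * |matA α β (j - 1) j|
          + |matApow α β n i (j + 1)| * |matA α β (j + 1) j| := by
          rw [← abs_mul, ← abs_mul]; exact abs_add_le _ _
      _ ≤ (2 * max α β) ^ n * max α β + (2 * max α β) ^ n * max α β := by
          gcongr <;> first
            | exact abs_nonneg _ | exact ih _ | exact abs_matA_le hα hβ _ _
      _ = (2 * max α β) ^ (n + 1) := by ring

lemma matApow_eq_zero {α β : ℝ} {n : ℕ} {i j : ℤ} (h : (n : ℤ) < |j - i|) :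
    matApow α β n i j = 0 := by
  induction n generalizing j with
  | zero =>
    simp only [Int.abs_eq_natAbs] at h
    simp only [matApow]
    rw [if_neg (by omega)]
  | succ n ih =>
    rw [matApow_succ, ih ?_, ih ?_, zero_mul, zero_mul, add_zero] <;>
      (simp only [Int.abs_eq_natAbs] at h ⊢; omega)

lemma matApow_support {α β : ℝ} {n : ℕ} {i : ℤ} {j : ℤ}
    (h : j ∉ Finset.Icc (i - (n : ℤ)) (i + (n : ℤ))) : matApow α β n i j = 0 := by
  apply matApow_eq_zero
  simp only [Finset.mem_Icc, Int.abs_eq_natAbs] at *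
  omega

lemma summable_row (α β : ℝ) (φ : ℤ → ℝ) (n : ℕ) (i : ℤ) :
    Summable (fun j : ℤ => matApow α β n i j * φ j) :=
  summable_of_ne_finset_zero (s := Finset.Icc (i - (n : ℤ)) (i + (n : ℤ)))
    (fun j hj => by rw [matApow_support hj, zero_mul])

/-- Left recursion: `A^{n+1} = A · A^n` entrywise. -/
lemma matApow_succ_left (α β : ℝ) (n : ℕ) (i j : ℤ) :
    matApow α β (n + 1) i j =
      (if Even i then β else α) * (matApow α β n (i + 1) j + matApow α β n (i - 1) j) := by
  induction n generalizing j with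
  | zero =>
    rw [matApow_succ]
    simp only [matApow, matA]
    split_ifs <;>
      first
        | ring1
        | (exfalso; omega)
        | (exfalso; simp only [Int.even_iff] at *; omega)
  | succ n ih =>
    rw [matApow_succ, ih (j - 1), ih (j + 1), matApow_succ, matApow_succ]
    ring

noncomputable def cseq (α β : ℝ) (φ : ℤ → ℝ) (n : ℕ) (j : ℤ) : ℝ :=
  ∑' k : ℤ, matApow α β n j k * φ k

lemma cseq_eq_sum (α β : ℝ) (φ : ℤ → ℝ) (n : ℕ) (j : ℤ) :
    cseq α β φ n j = ∑ k ∈ Finset.Icc (j - (n : ℤ)) (j + (n : ℤ)), matApow α β n j k * φ k :=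
  tsum_eq_sum (fun k hk => by rw [matApow_support hk, zero_mul])

lemma abs_cseq_le {α β M : ℝ} (hα : 0 < α) (hβ : 0 < β) {φ : ℤ → ℝ}
    (hM : ∀ k, |φ k| ≤ M) (n : ℕ) (j : ℤ) :
    |cseq α β φ n j| ≤ (2 * n + 1) * ((2 * max α β) ^ n * M) := by
  have hM0 : 0 ≤ M := (abs_nonneg _).trans (hM 0)
  rw [cseq_eq_sum]
  calc |∑ k ∈ Finset.Icc (j - (n : ℤ)) (j + (n : ℤ)), matApow α β n j k * φ k|
      ≤ ∑ k ∈ Finset.Icc (j - (n : ℤ)) (j + (n : ℤ)), |matApow α β n j k * φ k| :=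
        Finset.abs_sum_le_sum_abs _ _
    _ ≤ ∑ k ∈ Finset.Icc (j - (n : ℤ)) (j + (n : ℤ)), (2 * max α β) ^ n * M := by
        apply Finset.sum_le_sum
        intro k _
        rw [abs_mul]
        exact mul_le_mul (abs_matApow_le hα hβ n j k) (hM k) (abs_nonneg _)
          (by positivity)
    _ = (2 * n + 1) * ((2 * max α β) ^ n * M) := by
        rw [Finset.sum_const, nsmul_eq_mul]
        congr 1
        rw [Int.card_Icc, show (j + (n:ℤ) + 1 - (j - n)).toNat = 2 * n + 1 by omega]
        push_cast
        ring

lemma cseq_succ (α β : ℝ) (φ : ℤ → ℝ) (n : ℕ) (j : ℤ) :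
    cseq α β φ (n + 1) j =
      (if Even j then β else α) * (cseq α β φ n (j + 1) + cseq α β φ n (j - 1)) := by
  unfold cseq
  rw [← Summable.tsum_add (summable_row α β φ n (j + 1)) (summable_row α β φ n (j - 1)),
    ← tsum_mul_left]
  apply tsum_congr
  intro k
  rw [matApow_succ_left]
  ring


lemma two_n_bound (n : ℕ) : (2 * n + 1 : ℝ) ≤ 4 * 2 ^ n := by
  have h1 : (n : ℝ) < 2 ^ n := by exact_mod_cast Nat.lt_two_pow_self (n := n)
  have h2 : (1 : ℝ) ≤ 2 ^ n := one_le_pow₀ (by norm_num)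
  nlinarith

lemma summable_master (x C : ℝ) (hx : 0 ≤ x) (hC : 0 ≤ C) :
    Summable (fun n : ℕ => (2 * n + 1 : ℝ) * (x ^ n * C) / n.factorial) := by
  apply Summable.of_nonneg_of_le (fun n => by positivity) (fun n => ?_)
    ((Real.summable_pow_div_factorial (2 * x)).mul_left (4 * C))
  have hb : (2 * n + 1 : ℝ) * (x ^ n * C) ≤ 4 * C * (2 * x) ^ n := by
    rw [mul_pow]
    calc (2 * n + 1 : ℝ) * (x ^ n * C) ≤ 4 * 2 ^ n * (x ^ n * C) := by
          apply mul_le_mul_of_nonneg_right (two_n_bound n) (by positivity)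
      _ = 4 * C * (2 ^ n * x ^ n) := by ring
  have hfac : (0:ℝ) < n.factorial := by positivity
  calc (2 * n + 1 : ℝ) * (x ^ n * C) / n.factorial
      ≤ 4 * C * (2 * x) ^ n / n.factorial := (div_le_div_iff_of_pos_right hfac).mpr hb
    _ = 4 * C * ((2 * x) ^ n / n.factorial) := by ring

lemma tsum_abs_row_le {α β M : ℝ} (hα : 0 < α) (hβ : 0 < β) {φ : ℤ → ℝ}
    (hM : ∀ k, |φ k| ≤ M) (n : ℕ) (j : ℤ) :
    ∑' k : ℤ, |matApow α β n j k * φ k| ≤ (2 * n + 1) * ((2 * max α β) ^ n * M) := by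
  have hM0 : 0 ≤ M := (abs_nonneg _).trans (hM 0)
  rw [tsum_eq_sum (s := Finset.Icc (j - (n : ℤ)) (j + (n : ℤ)))
    (fun k hk => by rw [matApow_support hk, zero_mul, abs_zero])]
  calc ∑ k ∈ Finset.Icc (j - (n : ℤ)) (j + (n : ℤ)), |matApow α β n j k * φ k|
      ≤ ∑ k ∈ Finset.Icc (j - (n : ℤ)) (j + (n : ℤ)), (2 * max α β) ^ n * M := by
        apply Finset.sum_le_sum
        intro k _
        rw [abs_mul]
        exact mul_le_mul (abs_matApow_le hα hβ n j k) (hM k) (abs_nonneg _) (by positivity)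
    _ = (2 * n + 1) * ((2 * max α β) ^ n * M) := by
        rw [Finset.sum_const, nsmul_eq_mul,
          Int.card_Icc, show (j + (n:ℤ) + 1 - (j - n)).toNat = 2 * n + 1 by omega]
        push_cast
        ring

lemma summable_cseq_term {α β M : ℝ} (hα : 0 < α) (hβ : 0 < β) {φ : ℤ → ℝ}
    (hM : ∀ k, |φ k| ≤ M) (s : ℝ) (j : ℤ) :
    Summable (fun n : ℕ => s ^ n * cseq α β φ n j / n.factorial) := by
  have hM0 : 0 ≤ M := (abs_nonneg _).trans (hM 0)
  have hγ : 0 < max α β := lt_max_of_lt_left hα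
  apply Summable.of_norm
  apply Summable.of_nonneg_of_le (fun n => norm_nonneg _) (fun n => ?_)
    (summable_master (2 * max α β * |s|) M (by positivity) hM0)
  rw [Real.norm_eq_abs, abs_div, abs_mul, abs_pow, Nat.abs_cast]
  have hfac : (0:ℝ) < n.factorial := by positivity
  rw [div_le_div_iff_of_pos_right hfac]
  calc |s| ^ n * |cseq α β φ n j|
      ≤ |s| ^ n * ((2 * n + 1) * ((2 * max α β) ^ n * M)) := by
        apply mul_le_mul_of_nonneg_left (abs_cseq_le hα hβ hM n j) (by positivity)
    _ = (2 * n + 1) * ((2 * max α β * |s|) ^ n * M) := by rw [mul_pow]; ring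

lemma matExp_row_eq {α β M : ℝ} (hα : 0 < α) (hβ : 0 < β) {φ : ℤ → ℝ}
    (hM : ∀ k, |φ k| ≤ M) (s : ℝ) (j : ℤ) :
    ∑' k : ℤ, matExp α β s j k * φ k = ∑' n : ℕ, s ^ n * cseq α β φ n j / n.factorial := by
  have hM0 : 0 ≤ M := (abs_nonneg _).trans (hM 0)
  have hγ : 0 < max α β := lt_max_of_lt_left hα
  set F : ℕ → ℤ → ℝ := fun n k => s ^ n * matApow α β n j k * φ k / n.factorial with hF
  have hslice : ∀ n, Summable fun k => F n k := by
    intro n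
    apply ((summable_row α β φ n j).mul_left (s ^ n / n.factorial)).congr
    intro k; simp only [hF]; ring
  have h1 : ∀ n k, |F n k| = |s| ^ n / n.factorial * |matApow α β n j k * φ k| := by
    intro n k
    simp only [hF]
    rw [abs_div, abs_mul, abs_mul, abs_pow, Nat.abs_cast, abs_mul]
    ring
  have houter : ∀ n : ℕ, (∑' k, |F n k|)
      ≤ (2 * n + 1) * ((2 * max α β * |s|) ^ n * M) / n.factorial := by
    intro n
    calc (∑' k, |F n k|) = |s| ^ n / n.factorial * ∑' k, |matApow α β n j k * φ k| := by
          rw [← tsum_mul_left]; exact tsum_congr (h1 n)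
      _ ≤ |s| ^ n / n.factorial * ((2 * n + 1) * ((2 * max α β) ^ n * M)) := by
          apply mul_le_mul_of_nonneg_left (tsum_abs_row_le hα hβ hM n j) (by positivity)
      _ = (2 * n + 1) * ((2 * max α β * |s|) ^ n * M) / n.factorial := by
          rw [mul_pow]; ring
  have hunc : Summable (Function.uncurry F) := by
    apply Summable.of_norm
    rw [summable_prod_of_nonneg (fun p => norm_nonneg _)]
    constructor
    · intro n
      simp only [Function.uncurry, Real.norm_eq_abs]
      exact (hslice n).abs
    · apply Summable.of_nonneg_of_le
        (fun n => tsum_nonneg fun k => norm_nonneg _) (fun n => ?_)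
        (summable_master (2 * max α β * |s|) M (by positivity) hM0)
      simp only [Function.uncurry, Real.norm_eq_abs]
      exact houter n
  calc ∑' k : ℤ, matExp α β s j k * φ k
      = ∑' k, ∑' n, F n k := by
        apply tsum_congr; intro k
        rw [matExp, ← tsum_mul_right]
        apply tsum_congr; intro n; simp only [hF]; ring
    _ = ∑' n, ∑' k, F n k := Summable.tsum_comm hunc
    _ = ∑' n : ℕ, s ^ n * cseq α β φ n j / n.factorial := by
        apply tsum_congr; intro n
        rw [show s ^ n * cseq α β φ n j / n.factorial
            = (s ^ n / n.factorial) * cseq α β φ n j by ring, cseq, ← tsum_mul_left]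
        apply tsum_congr; intro k; simp only [hF]; ring

/-- For every bounded `φ : ℤ → ℝ`, every `i ∈ ℤ` and every `t > 0`, the function
`t ↦ e^{tA}[φ](i) = Σ_j (e^{tA})_{ij} φ(j)` is differentiable with derivative
`Σ_j a_{ij} e^{tA}[φ](j)`; thus `e^{tA}` is the fundamental solution of `U' = AU`. -/
theorem matExp_fundamental_solution (α β : ℝ) (hα : 0 < α) (hβ : 0 < β)
    (φ : ℤ → ℝ) (hφ : ∃ M : ℝ, ∀ i : ℤ, |φ i| ≤ M) (i : ℤ) (t : ℝ) (ht : 0 < t) :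
    HasDerivAt (fun s : ℝ => ∑' j : ℤ, matExp α β s i j * φ j)
      (∑' j : ℤ, matA α β i j * ∑' k : ℤ, matExp α β t j k * φ k) t := by
  obtain ⟨M, hM⟩ := hφ
  have hM0 : 0 ≤ M := (abs_nonneg _).trans (hM 0)
  have hγ : 0 < max α β := lt_max_of_lt_left hα
  set γ := max α β with hγdef
  set R : ℝ := t + 1 with hRdef
  have hR1 : 1 ≤ R := by simp only [hRdef]; linarith
  have hR0 : 0 < R := by linarith
  -- rewrite the function
  have hfun : (fun s : ℝ => ∑' j : ℤ, matExp α β s i j * φ j)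
      = fun s : ℝ => ∑' n : ℕ, s ^ n * cseq α β φ n i / n.factorial := by
    funext s; exact matExp_row_eq hα hβ hM s i
  -- rewrite the target derivative value
  have hRHS : (∑' j : ℤ, matA α β i j * ∑' k : ℤ, matExp α β t j k * φ k)
      = ∑' n : ℕ, t ^ n * cseq α β φ (n + 1) i / n.factorial := by
    rw [tsum_pair (a := i + 1) (b := i - 1) (by omega)
      (fun j h1 h2 => by rw [matA, if_neg (by omega), zero_mul])]
    rw [matExp_row_eq hα hβ hM t (i + 1), matExp_row_eq hα hβ hM t (i - 1)]
    rw [show matA α β i (i + 1) = (if Even i then β else α) by rw [matA, if_pos (by omega)],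
      show matA α β i (i - 1) = (if Even i then β else α) by rw [matA, if_pos (by omega)]]
    rw [← mul_add,
      ← Summable.tsum_add (summable_cseq_term hα hβ hM t (i + 1)) (summable_cseq_term hα hβ hM t (i - 1)),
      ← tsum_mul_left]
    apply tsum_congr; intro n
    rw [cseq_succ]
    ring
  rw [hfun, hRHS]
  -- derivative machinery
  set c : ℕ → ℝ := fun n => cseq α β φ n i with hc
  set g : ℕ → ℝ → ℝ := fun n s => s ^ n * c n / n.factorial with hg
  set g' : ℕ → ℝ → ℝ := fun n s => (n : ℝ) * s ^ (n - 1) * c n / n.factorial with hg'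
  set u : ℕ → ℝ := fun n => 4 * M * ((8 * γ * R) ^ n / n.factorial) with hu
  have hu_sum : Summable u := (Real.summable_pow_div_factorial (8 * γ * R)).mul_left (4 * M)
  have hderiv : ∀ (n : ℕ) (y : ℝ), y ∈ Set.Ioo (-R) R → HasDerivAt (g n) (g' n y) y := by
    intro n y _
    exact ((hasDerivAt_pow n y).mul_const (c n)).div_const (n.factorial : ℝ)
  have hbound : ∀ (n : ℕ) (y : ℝ), y ∈ Set.Ioo (-R) R → ‖g' n y‖ ≤ u n := by
    intro n y hy
    have hyR : |y| ≤ R := le_of_lt (abs_lt.mpr ⟨hy.1, hy.2⟩)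
    simp only [hg', hu, Real.norm_eq_abs]
    rw [abs_div, abs_mul, abs_mul, abs_pow, Nat.abs_cast, Nat.abs_cast]
    have hfac : (0:ℝ) < n.factorial := by positivity
    have a3 : (n : ℝ) ≤ 2 ^ n := by exact_mod_cast (Nat.lt_two_pow_self (n := n)).le
    have a1 : |y| ^ (n - 1) ≤ R ^ (n - 1) := pow_le_pow_left₀ (abs_nonneg y) hyR _
    have a2 : R ^ (n - 1) ≤ R ^ n := pow_le_pow_right₀ hR1 (Nat.sub_le n 1)
    have e1 : (n : ℝ) * |y| ^ (n - 1) ≤ 2 ^ n * R ^ n :=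
      mul_le_mul a3 (a1.trans a2) (by positivity) (by positivity)
    have e2 : |c n| ≤ 4 * 2 ^ n * ((2 * γ) ^ n * M) :=
      (abs_cseq_le hα hβ hM n i).trans
        (by
          rw [show (4 : ℝ) * 2 ^ n * ((2 * γ) ^ n * M) = 4 * 2 ^ n * ((2 * γ) ^ n * M) from rfl]
          exact mul_le_mul_of_nonneg_right (two_n_bound n) (by positivity))
    have e3 : (n : ℝ) * |y| ^ (n - 1) * |c n| ≤ 4 * M * (8 * γ * R) ^ n := by
      calc (n : ℝ) * |y| ^ (n - 1) * |c n|
          ≤ 2 ^ n * R ^ n * (4 * 2 ^ n * ((2 * γ) ^ n * M)) :=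
            mul_le_mul e1 e2 (abs_nonneg _) (by positivity)
        _ = 4 * M * (8 * γ * R) ^ n := by
            rw [show (8 : ℝ) * γ * R = 2 * (2 * γ) * (2 * R) by ring]
            simp only [mul_pow]
            ring
    calc (n : ℝ) * |y| ^ (n - 1) * |c n| / n.factorial
        ≤ 4 * M * (8 * γ * R) ^ n / n.factorial := (div_le_div_iff_of_pos_right hfac).mpr e3
      _ = 4 * M * ((8 * γ * R) ^ n / n.factorial) := by ring
  have ht_mem : t ∈ Set.Ioo (-R) R := ⟨by simp only [hRdef]; linarith, by simp only [hRdef]; linarith⟩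
  have hg0 : Summable fun n => g n t := summable_cseq_term hα hβ hM t i
  have key := hasDerivAt_tsum_of_isPreconnected hu_sum isOpen_Ioo isPreconnected_Ioo
    hderiv hbound ht_mem hg0 ht_mem
  have hg'_sum : Summable fun n => g' n t := by
    apply Summable.of_norm
    exact Summable.of_nonneg_of_le (fun n => norm_nonneg _) (fun n => hbound n t ht_mem) hu_sum
  have hval : (∑' n : ℕ, g' n t) = ∑' n : ℕ, t ^ n * c (n + 1) / n.factorial := by
    rw [Summable.tsum_eq_zero_add hg'_sum]
    have h0 : g' 0 t = 0 := by simp [hg']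
    rw [h0, zero_add]
    apply tsum_congr; intro n
    simp only [hg', Nat.add_sub_cancel, Nat.factorial_succ]
    have hfn : ((n.factorial : ℝ)) ≠ 0 := by positivity
    push_cast
    field_simp
  rw [← hval]
  exact key
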